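/- The first-passage probabilities Fᵢ := F([i], o) of the embedded chain satisfy the system of equations Fᵢ·((k⁻(i) + K) − Σᵣ k⁺(r)·Fᵣ) = k⁻(i) for every i ∈ Fin d; equivalently k⁻(i)/((k⁻(i) + K) − Σᵣ k⁺(r)·Fᵣ) = Fᵢ. -/

import Mathlib

/-- The first-passage probabilities `Fᵢ := F([i], o)` of the embedded
chain satisfy the system `Fᵢ · ((k⁻ i + K) − Σ r, k⁺ r · F r) = k⁻ i` for every `i`;
equivalently `k⁻ i / ((k⁻ i + K) − Σ r, k⁺ r · F r) = Fᵢ`.  Here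
`F(x,y) = Σ_{n≥1} fⁿ(x,y)` with `f¹ = p` and `fⁿ⁺¹(x,y) = Σ_{z≠y} p(x,z)·fⁿ(z,y)`. -/
theorem stmt14 (d : ℕ) (hd : 1 ≤ d) (kp km : Fin d → ℝ)
    (hkp : ∀ i, 0 < kp i) (hkm : ∀ i, 0 < km i)
    (K : ℝ) (hK : K = ∑ i : Fin d, kp i)
    (p : List (Fin d) → List (Fin d) → ℝ)
    (hp_root : ∀ i : Fin d, p [] [i] = kp i / K)
    (hp_up : ∀ (x : List (Fin d)) (i j : Fin d),
      p (x ++ [i]) (x ++ [i] ++ [j]) = kp j / (km i + K))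
    (hp_down : ∀ (x : List (Fin d)) (i : Fin d), p (x ++ [i]) x = km i / (km i + K))
    (hp_zero : ∀ x y : List (Fin d),
      (¬ ∃ i : Fin d, y = x ++ [i]) → (¬ ∃ i : Fin d, x = y ++ [i]) → p x y = 0)
    (f : ℕ → List (Fin d) → List (Fin d) → ℝ)
    (hf1 : ∀ x y : List (Fin d), f 1 x y = p x y)
    (hfs : ∀ n : ℕ, 1 ≤ n → ∀ x y : List (Fin d),
      f (n + 1) x y = ∑' z : List (Fin d), if z = y then 0 else p x z * f n z y) :
    ∀ i : Fin d,
      (∑' n : ℕ, f (n + 1) [i] [])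
          * ((km i + K) - ∑ r : Fin d, kp r * ∑' n : ℕ, f (n + 1) [r] []) = km i ∧
      km i / ((km i + K) - ∑ r : Fin d, kp r * ∑' n : ℕ, f (n + 1) [r] [])
          = ∑' n : ℕ, f (n + 1) [i] [] := by
  have hK0 : 0 < K := by
    rw [hK]
    exact Finset.sum_pos (fun i _ => hkp i) ⟨⟨0, hd⟩, Finset.mem_univ _⟩
  have hden : ∀ a : Fin d, 0 < km a + K := fun a => add_pos (hkm a) hK0
  -- nonnegativity of p
  have hp_nn : ∀ x y : List (Fin d), 0 ≤ p x y := by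
    intro x y
    by_cases h1 : ∃ j : Fin d, y = x ++ [j]
    · obtain ⟨j, rfl⟩ := h1
      rcases x.eq_nil_or_concat' with rfl | ⟨x', a, rfl⟩
      · rw [List.nil_append, hp_root]
        exact div_nonneg (hkp j).le hK0.le
      · rw [hp_up]
        exact div_nonneg (hkp j).le (hden a).le
    · by_cases h2 : ∃ j : Fin d, x = y ++ [j]
      · obtain ⟨j, rfl⟩ := h2
        rw [hp_down]
        exact div_nonneg (hkm j).le (hden j).le
      · rw [hp_zero x y h1 h2]
  -- the one-step recursion with the tsum computed as a finite sum
  have hrec : ∀ n : ℕ, 1 ≤ n → ∀ (x : List (Fin d)) (a : Fin d) (y : List (Fin d)),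
      f (n + 1) (x ++ [a]) y =
        (if x = y then 0 else km a / (km a + K) * f n x y)
        + ∑ j : Fin d,
            (if x ++ [a] ++ [j] = y then 0
             else kp j / (km a + K) * f n (x ++ [a] ++ [j]) y) := by
    intro n hn x a y
    rw [hfs n hn]
    have hS : ∑' z, (if z = y then 0 else p (x ++ [a]) z * f n z y)
        = ∑ z ∈ insert x (Finset.image (fun j => x ++ [a] ++ [j]) Finset.univ),
            (if z = y then 0 else p (x ++ [a]) z * f n z y) := by
      apply tsum_eq_sum
      intro z hz
      simp only [Finset.mem_insert, Finset.mem_image, Finset.mem_univ, true_and, not_or,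
        not_exists] at hz
      have hpz : p (x ++ [a]) z = 0 := by
        apply hp_zero
        · rintro ⟨j, rfl⟩; exact hz.2 j rfl
        · rintro ⟨j, hj⟩
          apply hz.1
          have h := congrArg List.dropLast hj
          simpa [List.dropLast_concat] using h.symm
      simp [hpz]
    rw [hS]
    have hxmem : x ∉ Finset.image (fun j => x ++ [a] ++ [j]) Finset.univ := by
      simp only [Finset.mem_image, Finset.mem_univ, true_and, not_exists]
      intro j h
      have := congrArg List.length h
      simp at this
    rw [Finset.sum_insert hxmem, Finset.sum_image (by
      intro j _ j' _ h
      simpa [List.append_assoc] using h)]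
    simp only [hp_up, hp_down]
  -- nonnegativity of f
  have hf_nn : ∀ n : ℕ, 1 ≤ n → ∀ x y : List (Fin d), 0 ≤ f n x y := by
    intro n hn
    induction n, hn using Nat.le_induction with
    | base => intro x y; rw [hf1]; exact hp_nn x y
    | succ n hn ih =>
      intro x y
      rw [hfs n hn]
      refine tsum_nonneg fun z => ?_
      by_cases hz : z = y
      · simp [hz]
      · simp only [hz, if_false]
        exact mul_nonneg (hp_nn _ _) (ih _ _)
  -- translation invariance
  have htrans : ∀ n : ℕ, 1 ≤ n → ∀ (x w : List (Fin d)), w ≠ [] →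
      f n (x ++ w) x = f n w [] := by
    intro n hn
    induction n, hn using Nat.le_induction with
    | base =>
      intro x w hw
      rcases w.eq_nil_or_concat' with rfl | ⟨w', a, rfl⟩
      · exact absurd rfl hw
      rw [hf1, hf1]
      rcases w'.eq_nil_or_concat' with rfl | ⟨w'', b, rfl⟩
      · simp only [List.nil_append]
        rw [hp_down x a]
        have h2 := hp_down [] a
        simpa using h2.symm
      · rw [hp_zero, hp_zero]
        · simp
        · rintro ⟨i, hi⟩
          have := congrArg List.length hi
          simp at this
        · rintro ⟨i, hi⟩
          have := congrArg List.length hi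
          simp at this
        · rintro ⟨i, hi⟩
          have := congrArg List.length hi
          simp at this
    | succ n hn ih =>
      intro x w hw
      rcases w.eq_nil_or_concat' with rfl | ⟨w', a, rfl⟩
      · exact absurd rfl hw
      have e1 := hrec n hn (x ++ w') a x
      have e2 := hrec n hn w' a []
      simp only [← List.append_assoc] at e1 e2 ⊢
      rw [e1, e2]
      have hif : (if x ++ w' = x then (0:ℝ) else km a / (km a + K) * f n (x ++ w') x)
          = (if w' = [] then (0:ℝ) else km a / (km a + K) * f n w' []) := by
        by_cases hw' : w' = []
        · subst hw'; simp
        · rw [if_neg (fun h => hw' (by simpa using h)), if_neg hw', ih x w' hw']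
      rw [hif]
      congr 1
      refine Finset.sum_congr rfl fun j _ => ?_
      rw [if_neg (fun h => by have := congrArg List.length h; simp at this),
        if_neg (by simp)]
      have h3 := ih x (w' ++ [a] ++ [j]) (by simp)
      simp only [← List.append_assoc] at h3
      rw [h3]
  -- sum reindexing helpers
  have hIco1 : ∀ (g : ℕ → ℝ) (N : ℕ),
      ∑ m ∈ Finset.Ico 1 (N + 1), g m = ∑ i ∈ Finset.range N, g (i + 1) := by
    intro g N
    induction N with
    | zero => simp
    | succ N ihN => rw [Finset.sum_Ico_succ_top (by omega), ihN, Finset.sum_range_succ]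
  have hIco2 : ∀ (g : ℕ → ℝ) (N : ℕ),
      ∑ m ∈ Finset.Ico 1 (N + 1 + 1), g m = g 1 + ∑ i ∈ Finset.range N, g (i + 2) := by
    intro g N
    induction N with
    | zero => rw [Finset.sum_Ico_succ_top (by omega)]; simp
    | succ N ihN => rw [Finset.sum_Ico_succ_top (by omega), ihN, Finset.sum_range_succ]; ring
  -- convolution (first passage decomposition)
  have hconv : ∀ n : ℕ, 1 ≤ n → ∀ x : List (Fin d), x ≠ [] → ∀ w : List (Fin d), w ≠ [] →
      f n (x ++ w) [] =
        ∑ m ∈ Finset.Ico 1 n, f m (x ++ w) x * f (n - m) x [] := by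
    intro n hn
    induction n, hn using Nat.le_induction with
    | base =>
      intro x hx w hw
      rw [hf1]
      rw [show Finset.Ico 1 1 = ∅ from rfl, Finset.sum_empty]
      apply hp_zero
      · rintro ⟨i, hi⟩
        have := congrArg List.length hi
        simp at this
      · rintro ⟨i, hi⟩
        have := congrArg List.length hi
        have hx1 : 0 < x.length := List.length_pos_iff.mpr hx
        have hw1 : 0 < w.length := List.length_pos_iff.mpr hw
        simp [List.length_append] at this
        omega
    | succ n hn ih =>
      intro x hx w hw
      rcases w.eq_nil_or_concat' with rfl | ⟨w', a, rfl⟩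
      · exact absurd rfl hw
      obtain ⟨N, rfl⟩ : ∃ N, n = N + 1 := ⟨n - 1, by omega⟩
      have e1 := hrec (N + 1) (by omega) (x ++ w') a []
      simp only [← List.append_assoc] at e1 ⊢
      rw [e1]
      rw [hIco2 (fun m => f m (x ++ w' ++ [a]) x * f (N + 1 + 1 - m) x []) N]
      rw [if_neg (show ¬ x ++ w' = [] by simp [hx])]
      have hch : ∀ j : Fin d,
          (if x ++ w' ++ [a] ++ [j] = ([] : List (Fin d)) then (0:ℝ)
           else kp j / (km a + K) * f (N + 1) (x ++ w' ++ [a] ++ [j]) [])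
          = kp j / (km a + K) * f (N + 1) (x ++ w' ++ [a] ++ [j]) [] := fun j => if_neg (by simp)
      simp only [hch]
      -- expand children on the left via ih and hIco1
      have hLch : ∀ j : Fin d, f (N + 1) (x ++ w' ++ [a] ++ [j]) [] =
          ∑ i ∈ Finset.range N, f (i + 1) (x ++ w' ++ [a] ++ [j]) x * f (N - i) x [] := by
        intro j
        have h := ih x hx (w' ++ [a] ++ [j]) (by simp)
        simp only [← List.append_assoc] at h
        rw [h, hIco1 (fun m => f m (x ++ w' ++ [a] ++ [j]) x * f (N + 1 - m) x []) N]
        refine Finset.sum_congr rfl fun i hi => ?_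
        have : N + 1 - (i + 1) = N - i := by omega
        rw [this]
      simp only [hLch]
      -- expand the (i+2)-terms on the right via hrec
      have hRterm : ∀ i ∈ Finset.range N,
          f (i + 2) (x ++ w' ++ [a]) x * f (N + 1 + 1 - (i + 2)) x [] =
            ((if x ++ w' = x then 0 else km a / (km a + K) * f (i + 1) (x ++ w') x)
              + ∑ j : Fin d, kp j / (km a + K) * f (i + 1) (x ++ w' ++ [a] ++ [j]) x)
              * f (N - i) x [] := by
        intro i hi
        have e2 := hrec (i + 1) (by omega) (x ++ w') a x
        have harith : N + 1 + 1 - (i + 2) = N - i := by omega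
        rw [show i + 1 + 1 = i + 2 from rfl] at e2
        rw [e2, harith]
        congr 2
        refine Finset.sum_congr rfl fun j _ => ?_
        rw [if_neg (show ¬ x ++ w' ++ [a] ++ [j] = x by
          intro h; have := congrArg List.length h; simp at this)]
      rw [Finset.sum_congr rfl hRterm]
      -- the m = 1 term on the right
      rw [hf1, show N + 1 + 1 - 1 = N + 1 from rfl]
      by_cases hw' : w' = []
      · subst hw'
        simp only [List.append_nil, List.nil_append, if_pos rfl, zero_add]
        rw [hp_down x a]
        simp only [Finset.sum_mul, Finset.mul_sum, mul_assoc]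
        rw [Finset.sum_comm]
        simp only [if_true, zero_add, Finset.sum_mul, mul_assoc]
      · simp only [if_neg (show ¬ x ++ w' = x by
          intro h; exact hw' (by simpa using h))]
        rw [hp_zero (x ++ w' ++ [a]) x ?c1 ?c2]
        case c1 =>
          rintro ⟨i, hi⟩
          have := congrArg List.length hi
          simp at this
        case c2 =>
          rintro ⟨i, hi⟩
          have := congrArg List.length hi
          simp [List.length_append] at this
          exact hw' this
        rw [zero_mul, zero_add]
        have hLfirst : f (N + 1) (x ++ w') [] =
            ∑ i ∈ Finset.range N, f (i + 1) (x ++ w') x * f (N - i) x [] := by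
          have h := ih x hx w' hw'
          rw [h, hIco1 (fun m => f m (x ++ w') x * f (N + 1 - m) x []) N]
          refine Finset.sum_congr rfl fun i hi => ?_
          have : N + 1 - (i + 1) = N - i := by omega
          rw [this]
        rw [hLfirst]
        simp only [add_mul, Finset.sum_add_distrib, Finset.sum_mul, Finset.mul_sum, mul_assoc]
        congr 1
        rw [Finset.sum_comm]
  -- boundedness of partial sums
  have hbound : ∀ N : ℕ, ∀ (x : List (Fin d)) (a : Fin d),
      ∑ m ∈ Finset.range N, f (m + 1) (x ++ [a]) [] ≤ 1 := by
    intro N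
    induction N with
    | zero => intro x a; simp
    | succ N ihN =>
      intro x a
      rw [Finset.sum_range_succ']
      have hexp : ∀ i ∈ Finset.range N, f (i + 1 + 1) (x ++ [a]) [] =
          (if x = [] then 0 else km a / (km a + K) * f (i + 1) x [])
          + ∑ j : Fin d, kp j / (km a + K) * f (i + 1) (x ++ [a] ++ [j]) [] := by
        intro i _
        rw [hrec (i + 1) (by omega) x a []]
        congr 1
        exact Finset.sum_congr rfl fun j _ => if_neg (by simp)
      rw [Finset.sum_congr rfl hexp, Finset.sum_add_distrib]
      have hb1 : ∑ i ∈ Finset.range N,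
          (if x = [] then (0:ℝ) else km a / (km a + K) * f (i + 1) x [])
          ≤ (if x = [] then 0 else km a / (km a + K)) := by
        by_cases hx : x = []
        · simp [hx]
        · simp only [if_neg hx]
          rcases x.eq_nil_or_concat' with rfl | ⟨x', b, rfl⟩
          · exact absurd rfl hx
          rw [← Finset.mul_sum]
          calc km a / (km a + K) * ∑ i ∈ Finset.range N, f (i + 1) (x' ++ [b]) []
              ≤ km a / (km a + K) * 1 :=
                mul_le_mul_of_nonneg_left (ihN x' b) (div_nonneg (hkm a).le (hden a).le)
            _ = km a / (km a + K) := mul_one _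
      have hb2 : ∑ i ∈ Finset.range N,
          ∑ j : Fin d, kp j / (km a + K) * f (i + 1) (x ++ [a] ++ [j]) []
          ≤ K / (km a + K) := by
        rw [Finset.sum_comm]
        calc ∑ j : Fin d, ∑ i ∈ Finset.range N,
              kp j / (km a + K) * f (i + 1) (x ++ [a] ++ [j]) []
            ≤ ∑ j : Fin d, kp j / (km a + K) := by
              refine Finset.sum_le_sum fun j _ => ?_
              rw [← Finset.mul_sum]
              calc kp j / (km a + K) * ∑ i ∈ Finset.range N, f (i + 1) (x ++ [a] ++ [j]) []
                  ≤ kp j / (km a + K) * 1 :=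
                    mul_le_mul_of_nonneg_left (ihN (x ++ [a]) j)
                      (div_nonneg (hkp j).le (hden a).le)
                _ = kp j / (km a + K) := mul_one _
          _ = K / (km a + K) := by rw [← Finset.sum_div, ← hK]
      have hb3 : f (0 + 1) (x ++ [a]) [] ≤ (if x = [] then km a / (km a + K) else 0) := by
        rw [hf1]
        by_cases hx : x = []
        · subst hx
          rw [if_pos rfl]
          exact le_of_eq (hp_down [] a)
        · rw [if_neg hx]
          refine le_of_eq (hp_zero _ _ ?_ ?_)
          · rintro ⟨i, hi⟩
            have := congrArg List.length hi
            simp at this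
          · rintro ⟨i, hi⟩
            have := congrArg List.length hi
            simp at this
            exact hx this
      have hsum1 : km a / (km a + K) + K / (km a + K) = 1 := by
        rw [← add_div, div_self (hden a).ne']
      calc _ ≤ ((if x = [] then (0:ℝ) else km a / (km a + K)) + K / (km a + K))
            + (if x = [] then km a / (km a + K) else 0) := add_le_add (add_le_add hb1 hb2) hb3
        _ ≤ 1 := by by_cases hx : x = [] <;> simp [hx] <;> linarith
  -- summability of the first-passage series
  have hbnn : ∀ (j : Fin d) (n : ℕ), 0 ≤ f (n + 1) [j] [] :=
    fun j n => hf_nn (n + 1) (by omega) _ _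
  have hb : ∀ j : Fin d, Summable (fun n => f (n + 1) [j] []) := by
    intro j
    apply summable_of_sum_range_le (hbnn j)
    intro n
    simpa using hbound n [] j
  have hbnorm : ∀ j : Fin d, Summable (fun n => ‖f (n + 1) [j] []‖) := by
    intro j
    have h : (fun n => ‖f (n + 1) [j] []‖) = fun n => f (n + 1) [j] [] :=
      funext fun n => Real.norm_of_nonneg (hbnn j n)
    rw [h]; exact hb j
  intro i
  -- Cauchy products
  have hcauchyS : ∀ j : Fin d, Summable
      (fun n => ∑ k ∈ Finset.range (n + 1), f (k + 1) [j] [] * f (n - k + 1) [i] []) :=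
    fun j => (summable_norm_sum_mul_range_of_summable_norm (hbnorm j) (hbnorm i)).of_norm
  have hcauchyT : ∀ j : Fin d,
      ∑' n : ℕ, (∑ k ∈ Finset.range (n + 1), f (k + 1) [j] [] * f (n - k + 1) [i] [])
        = (∑' n : ℕ, f (n + 1) [j] []) * (∑' n : ℕ, f (n + 1) [i] []) :=
    fun j => (tsum_mul_tsum_eq_tsum_sum_range_of_summable_norm (hbnorm j) (hbnorm i)).symm
  -- the convolution identity for states of depth 2
  have hcrel : ∀ (j : Fin d) (n : ℕ), f (n + 1 + 1) ([i] ++ [j]) [] =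
      ∑ k ∈ Finset.range (n + 1), f (k + 1) [j] [] * f (n - k + 1) [i] [] := by
    intro j n
    have h := hconv (n + 1 + 1) (by omega) [i] (by simp) [j] (by simp)
    rw [h, hIco1 (fun m => f m ([i] ++ [j]) [i] * f (n + 1 + 1 - m) [i] []) (n + 1)]
    refine Finset.sum_congr rfl fun k hk => ?_
    rw [htrans (k + 1) (by omega) [i] [j] (by simp)]
    have hk' : k ≤ n := by simpa [Nat.lt_succ_iff] using Finset.mem_range.mp hk
    have harith : n + 1 + 1 - (k + 1) = n - k + 1 := by omega
    rw [harith]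
  have hrec1 : ∀ n : ℕ, f (n + 1 + 1) [i] [] =
      ∑ j : Fin d, kp j / (km i + K) * f (n + 1) ([i] ++ [j]) [] := by
    intro n
    have h := hrec (n + 1) (by omega) [] i []
    simp only [List.nil_append] at h
    rw [h]
    simp only [if_true, zero_add]
    exact Finset.sum_congr rfl fun j _ => if_neg (by simp)
  have hcsum : ∀ j : Fin d, Summable (fun n => f (n + 1) ([i] ++ [j]) []) := by
    intro j
    rw [← summable_nat_add_iff 1]
    exact (hcauchyS j).congr fun n => (hcrel j n).symm
  have hctsum : ∀ j : Fin d, ∑' n : ℕ, f (n + 1) ([i] ++ [j]) []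
      = (∑' n : ℕ, f (n + 1) [j] []) * (∑' n : ℕ, f (n + 1) [i] []) := by
    intro j
    rw [(hcsum j).tsum_eq_zero_add]
    have h0 : f (0 + 1) ([i] ++ [j]) [] = 0 := by
      rw [hf1]
      apply hp_zero
      · rintro ⟨r, hr⟩; have := congrArg List.length hr; simp at this
      · rintro ⟨r, hr⟩; have := congrArg List.length hr; simp at this
    rw [h0, zero_add, tsum_congr (fun n => hcrel j n)]
    exact hcauchyT j
  -- the renewal equation
  have hFi : (∑' n : ℕ, f (n + 1) [i] []) = km i / (km i + K)
      + (∑ r : Fin d, kp r * ∑' n : ℕ, f (n + 1) [r] [])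
        * (∑' n : ℕ, f (n + 1) [i] []) / (km i + K) := by
    conv_lhs => rw [(hb i).tsum_eq_zero_add]
    have h0 : f (0 + 1) [i] [] = km i / (km i + K) := by
      rw [hf1]; simpa using hp_down [] i
    have h1 : ∑' n : ℕ, f (n + 1 + 1) [i] [] =
        ∑ j : Fin d, kp j / (km i + K)
          * ((∑' n : ℕ, f (n + 1) [j] []) * (∑' n : ℕ, f (n + 1) [i] [])) := by
      rw [tsum_congr (fun n => hrec1 n),
        Summable.tsum_finsetSum (fun j _ => ((hcsum j).mul_left _))]
      refine Finset.sum_congr rfl fun j _ => ?_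
      rw [tsum_mul_left, hctsum j]
    rw [h0, h1]
    congr 1
    rw [Finset.sum_mul, Finset.sum_div]
    exact Finset.sum_congr rfl fun j _ => by ring
  set Fi := ∑' n : ℕ, f (n + 1) [i] [] with hFidef
  set S := ∑ r : Fin d, kp r * ∑' n : ℕ, f (n + 1) [r] [] with hSdef
  have hD : km i + K ≠ 0 := (hden i).ne'
  have h2 : Fi * (km i + K) = km i + S * Fi := by
    field_simp at hFi
    linarith [hFi]
  have hgoal1 : Fi * ((km i + K) - S) = km i := by linear_combination h2
  refine ⟨hgoal1, ?_⟩
  have hne : (km i + K) - S ≠ 0 := by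
    intro h
    rw [h, mul_zero] at hgoal1
    exact (hkm i).ne' hgoal1.symm
  rw [eq_comm, eq_div_iff hne]
  exact hgoal1
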